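/- Let (X, Y) be a complete cotorsion pair in K^{[-1,0]}(proj Λ). Then X = CCone(X∩Y, X∩Y): every X ∈ X fits into a conflation X ↣ U₀ ↠ U₁ with U₀, U₁ ∈ X ∩ Y. -/

import Mathlib

/-! **Statement 14.**  `K^{[-1,0]}(proj Λ)` is realized concretely inside the homotopy
category of cochain complexes of `Λ`-modules; its conflations are the distinguished
triangles with all terms in the subcategory, and `E(A, B) = Hom(A, B⟦1⟧)`. -/

open CategoryTheory Limits Pretriangulated

namespace Stmt14

universe u
variable (Λ : Type u) [Ring Λ]

/-- The homotopy category of cochain complexes of `Λ`-modules. -/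
abbrev HtpyCat := HomotopyCategory (ModuleCat.{u} Λ) (ComplexShape.up ℤ)

/-- The subcategory `K^{[-1,0]}(proj Λ)`. -/
def KLam : Set (HtpyCat Λ) :=
  {X | ∃ C : CochainComplex (ModuleCat.{u} Λ) ℤ,
    (∀ i : ℤ, i ≠ -1 → i ≠ 0 → IsZero (C.X i)) ∧
    Module.Projective Λ (C.X (-1)) ∧ Module.Projective Λ (C.X 0) ∧
    Module.Finite Λ (C.X (-1)) ∧ Module.Finite Λ (C.X 0) ∧
    Nonempty (X ≅ (HomotopyCategory.quotient _ _).obj C)}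

/-- Conflations of `K^{[-1,0]}(proj Λ)`. -/
def IsConflation {X Y Z : HtpyCat Λ} (f : X ⟶ Y) (g : Y ⟶ Z) : Prop :=
  X ∈ KLam Λ ∧ Y ∈ KLam Λ ∧ Z ∈ KLam Λ ∧
    ∃ h : Z ⟶ X⟦(1 : ℤ)⟧, Triangle.mk f g h ∈ distTriang (HtpyCat Λ)

/-- `(X, Y)` is a cotorsion pair: `Y = X^{⊥₁}` and `X = ^{⊥₁}Y` with respect to
`E(−,−) = Hom(−, −⟦1⟧)`. -/
def IsCotorsionPair (X Y : Set (HtpyCat Λ)) : Prop :=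
  X ⊆ KLam Λ ∧ Y ⊆ KLam Λ ∧
  (∀ A ∈ KLam Λ, (A ∈ X ↔ ∀ B ∈ Y, ∀ φ : A ⟶ B⟦(1 : ℤ)⟧, φ = 0)) ∧
  (∀ B ∈ KLam Λ, (B ∈ Y ↔ ∀ A ∈ X, ∀ φ : A ⟶ B⟦(1 : ℤ)⟧, φ = 0))

/-- The cotorsion pair `(X, Y)` is complete: `K = Cone(Y, X) = CCone(Y, X)`. -/
def IsCompleteCotorsionPair (X Y : Set (HtpyCat Λ)) : Prop :=
  IsCotorsionPair Λ X Y ∧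
  (∀ M ∈ KLam Λ, ∃ (B A : HtpyCat Λ) (f : B ⟶ A) (g : A ⟶ M),
    B ∈ Y ∧ A ∈ X ∧ IsConflation Λ f g) ∧
  (∀ M ∈ KLam Λ, ∃ (B A : HtpyCat Λ) (f : M ⟶ B) (g : B ⟶ A),
    B ∈ Y ∧ A ∈ X ∧ IsConflation Λ f g)


lemma key_van (P Q : CochainComplex (ModuleCat.{u} Λ) ℤ)
    (hP : ∀ i : ℤ, i ≠ -1 → i ≠ 0 → IsZero (P.X i))
    (hQ : ∀ i : ℤ, i ≠ -1 → i ≠ 0 → IsZero (Q.X i))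
    (χ : (HomotopyCategory.quotient (ModuleCat.{u} Λ) (ComplexShape.up ℤ)).obj P ⟶
      ((HomotopyCategory.quotient (ModuleCat.{u} Λ) (ComplexShape.up ℤ)).obj Q)⟦(2 : ℤ)⟧) :
    χ = 0 := by
  let e := ((HomotopyCategory.quotient (ModuleCat.{u} Λ)
    (ComplexShape.up ℤ)).commShiftIso (2 : ℤ)).app Q
  obtain ⟨ψ, hψ⟩ := (HomotopyCategory.quotient (ModuleCat.{u} Λ)
    (ComplexShape.up ℤ)).map_surjective (χ ≫ e.inv)
  have hψ0 : ψ = 0 := by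
    apply HomologicalComplex.hom_ext
    intro i
    by_cases h1 : i = -1
    · subst h1
      exact (IsZero.of_iso (hQ 1 (by norm_num) (by norm_num))
        (Q.shiftFunctorObjXIso 2 (-1) 1 (by norm_num))).eq_of_tgt _ _
    · by_cases h0 : i = 0
      · subst h0
        exact (IsZero.of_iso (hQ 2 (by norm_num) (by norm_num))
          (Q.shiftFunctorObjXIso 2 0 2 (by norm_num))).eq_of_tgt _ _
      · exact (hP i h1 h0).eq_of_src _ _
  have h0 : χ ≫ e.inv = 0 := by rw [← hψ, hψ0, Functor.map_zero]
  rw [← cancel_mono e.inv, h0, zero_comp]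

lemma van2 (A C : HtpyCat Λ) (hA : A ∈ KLam Λ) (hC : C ∈ KLam Λ)
    (φ : A ⟶ (C⟦(1 : ℤ)⟧)⟦(1 : ℤ)⟧) : φ = 0 := by
  obtain ⟨P, hP, -, -, -, -, ⟨eA⟩⟩ := hA
  obtain ⟨Q, hQ, -, -, -, -, ⟨eC⟩⟩ := hC
  let i1 : (C⟦(1 : ℤ)⟧)⟦(1 : ℤ)⟧ ≅
      (((HomotopyCategory.quotient (ModuleCat.{u} Λ)
        (ComplexShape.up ℤ)).obj Q)⟦(1 : ℤ)⟧)⟦(1 : ℤ)⟧ :=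
    (shiftFunctor (HtpyCat Λ) (1 : ℤ)).mapIso
      ((shiftFunctor (HtpyCat Λ) (1 : ℤ)).mapIso eC)
  let i2 : (((HomotopyCategory.quotient (ModuleCat.{u} Λ)
        (ComplexShape.up ℤ)).obj Q)⟦(1 : ℤ)⟧)⟦(1 : ℤ)⟧ ≅
      ((HomotopyCategory.quotient (ModuleCat.{u} Λ)
        (ComplexShape.up ℤ)).obj Q)⟦(2 : ℤ)⟧ := (shiftFunctorAdd' (HtpyCat Λ) (1 : ℤ) (1 : ℤ) (2 : ℤ) (by norm_num)).symm.app
      ((HomotopyCategory.quotient (ModuleCat.{u} Λ) (ComplexShape.up ℤ)).obj Q)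
  have hk := key_van Λ P Q hP hQ (eA.inv ≫ φ ≫ i1.hom ≫ i2.hom)
  rw [← cancel_epi eA.inv, ← cancel_mono i1.hom, ← cancel_mono i2.hom]
  simpa using hk

/-- Let `(X, Y)` be a complete cotorsion pair in `K^{[-1,0]}(proj Λ)`.
Then `X = CCone(X ∩ Y, X ∩ Y)`: every `A ∈ X` fits into a conflation `A ↣ U₀ ↠ U₁` with
`U₀, U₁ ∈ X ∩ Y`. -/
theorem stmt14 (X Y : Set (HtpyCat Λ)) (hXY : IsCompleteCotorsionPair Λ X Y) :
    ∀ A ∈ X, ∃ (U₀ U₁ : HtpyCat Λ) (f : A ⟶ U₀) (g : U₀ ⟶ U₁),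
      U₀ ∈ X ∩ Y ∧ U₁ ∈ X ∩ Y ∧ IsConflation Λ f g := by
  obtain ⟨⟨hXK, hYK, hXc, hYc⟩, -, hCC⟩ := hXY
  intro A hA
  obtain ⟨B, A', f, g, hB, hA', hconf⟩ := hCC A (hXK hA)
  obtain ⟨hAK, hBK, hA'K, h, hT⟩ := hconf
  refine ⟨B, A', f, g, ⟨?_, hB⟩, ⟨hA', ?_⟩, hAK, hBK, hA'K, h, hT⟩
  · rw [hXc B hBK]
    intro C hC φ
    obtain ⟨ψ, hφ⟩ := Triangle.yoneda_exact₂ _ hT φ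
      ((hXc A (hXK hA)).1 hA C hC (f ≫ φ))
    rw [hφ, (hXc A' hA'K).1 hA' C hC ψ]
    exact comp_zero
  · rw [hYc A' hA'K]
    intro A'' hA'' φ
    have hT1 := Triangle.shift_distinguished _ hT 1
    obtain ⟨ψ, hφ⟩ := Triangle.coyoneda_exact₃ _ hT1 φ
      (van2 Λ A'' A (hXK hA'') hAK _)
    rw [hφ, (hYc B hBK).1 hB A'' hA'' ψ]
    exact zero_comp

end Stmt14
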